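/- Let Δ = [[0,1],[−1,0]] and Δ_n the n-fold direct sum of Δ. If a real symmetric 2n×2n matrix ν satisfies ν + iΔ_n ≥ 0 (as a complex Hermitian matrix), then ν is positive definite. -/

import Mathlib

open Matrix ComplexOrder

/-- `Δ_n = Δ ⊕ ⋯ ⊕ Δ` with `Δ = [[0,1],[−1,0]]` (0-based indexing):
entry `(i, i+1) = 1` for even `i`, entry `(i+1, i) = −1` for even `i`, zeros elsewhere. -/
def DeltaN (n : ℕ) : Matrix (Fin (2*n)) (Fin (2*n)) ℝ :=
  fun i j =>
    if (i:ℕ) % 2 = 0 ∧ (j:ℕ) = (i:ℕ) + 1 then 1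
    else if (j:ℕ) % 2 = 0 ∧ (i:ℕ) = (j:ℕ) + 1 then -1
    else 0

lemma deltaN_eq_zero {n : ℕ} {i j : Fin (2*n)}
    (h1 : ¬((i:ℕ) % 2 = 0 ∧ (j:ℕ) = (i:ℕ) + 1))
    (h2 : ¬((j:ℕ) % 2 = 0 ∧ (i:ℕ) = (j:ℕ) + 1)) : DeltaN n i j = 0 := by
  simp only [DeltaN, if_neg h1, if_neg h2]

lemma deltaN_eq_one {n : ℕ} {i j : Fin (2*n)}
    (h1 : (i:ℕ) % 2 = 0) (h2 : (j:ℕ) = (i:ℕ) + 1) : DeltaN n i j = 1 := by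
  simp only [DeltaN]
  rw [if_pos (show (i:ℕ) % 2 = 0 ∧ (j:ℕ) = (i:ℕ) + 1 from ⟨h1, h2⟩)]

lemma deltaN_eq_negOne {n : ℕ} {i j : Fin (2*n)}
    (h1 : (j:ℕ) % 2 = 0) (h2 : (i:ℕ) = (j:ℕ) + 1) : DeltaN n i j = -1 := by
  have : ¬((i:ℕ) % 2 = 0 ∧ (j:ℕ) = (i:ℕ) + 1) := by omega
  simp only [DeltaN]
  rw [if_neg this, if_pos (show (j:ℕ) % 2 = 0 ∧ (i:ℕ) = (j:ℕ) + 1 from ⟨h1, h2⟩)]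

lemma deltaN_transpose (n : ℕ) : (DeltaN n)ᵀ = -(DeltaN n) := by
  ext i j
  simp only [transpose_apply, Matrix.neg_apply, DeltaN]
  split_ifs with h1 h2 h3 <;> first | (exfalso; omega) | norm_num

lemma deltaN_mulVec (n : ℕ) (x : Fin (2*n) → ℝ) (i : Fin (2*n)) :
    (DeltaN n *ᵥ x) i =
      if h : (i:ℕ) % 2 = 0 then x ⟨(i:ℕ)+1, by omega⟩ else - x ⟨(i:ℕ)-1, by omega⟩ := by
  rw [mulVec, dotProduct]
  split_ifs with h
  · rw [Finset.sum_eq_single (⟨(i:ℕ)+1, by omega⟩ : Fin (2*n))]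
    · rw [deltaN_eq_one h rfl, one_mul]
    · intro k _ hk
      have hkv : (k:ℕ) ≠ (i:ℕ)+1 := fun hh => hk (Fin.ext hh)
      rw [deltaN_eq_zero (by omega) (by omega), zero_mul]
    · simp
  · rw [Finset.sum_eq_single (⟨(i:ℕ)-1, by omega⟩ : Fin (2*n))]
    · rw [deltaN_eq_negOne (by simp; omega) (by simp; omega)]
      ring
    · intro k _ hk
      have hkv : (k:ℕ) ≠ (i:ℕ)-1 := fun hh => hk (Fin.ext hh)
      rw [deltaN_eq_zero (by omega) (by omega), zero_mul]
    · simp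

lemma deltaN_sq_mulVec (n : ℕ) (x : Fin (2*n) → ℝ) :
    DeltaN n *ᵥ (DeltaN n *ᵥ x) = -x := by
  funext i
  rw [deltaN_mulVec]
  by_cases h : (i:ℕ) % 2 = 0
  · rw [dif_pos h, deltaN_mulVec, dif_neg (show ¬((((⟨(i:ℕ)+1, by omega⟩ : Fin (2*n)):ℕ)) % 2 = 0) by simp; omega)]
    simp only [Pi.neg_apply]
    exact congrArg (fun j => -x j) (Fin.ext (show (i:ℕ)+1-1 = (i:ℕ) by omega))
  · rw [dif_neg h, deltaN_mulVec, dif_pos (show ((((⟨(i:ℕ)-1, by omega⟩ : Fin (2*n)):ℕ)) % 2 = 0) by simp; omega)]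
    simp only [Pi.neg_apply]
    exact congrArg (fun j => -x j) (Fin.ext (show (i:ℕ)-1+1 = (i:ℕ) by omega))

/-- If a real symmetric `2n×2n` matrix `ν` satisfies `ν + iΔ_n ≥ 0` (as a complex
Hermitian matrix), then `ν` is positive definite. -/
theorem posDef_of_uncertainty (n : ℕ) (ν : Matrix (Fin (2*n)) (Fin (2*n)) ℝ)
    (hsymm : ν.IsSymm)
    (h : (ν.map (fun x : ℝ => (x : ℂ)) +
          Complex.I • (DeltaN n).map (fun x : ℝ => (x : ℂ))).PosSemidef) :
    ν.PosDef := by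
  set Δ := DeltaN n with hΔ
  have hsymm' : ∀ u v : Fin (2*n) → ℝ, u ⬝ᵥ (ν *ᵥ v) = v ⬝ᵥ (ν *ᵥ u) := by
    intro u v
    rw [dotProduct_mulVec, ← mulVec_transpose, hsymm.eq, dotProduct_comm]
  have hskew : ∀ u v : Fin (2*n) → ℝ, u ⬝ᵥ (Δ *ᵥ v) = -(v ⬝ᵥ (Δ *ᵥ u)) := by
    intro u v
    rw [dotProduct_mulVec, ← mulVec_transpose, deltaN_transpose, neg_mulVec,
      neg_dotProduct, dotProduct_comm]
  have hskew0 : ∀ u : Fin (2*n) → ℝ, u ⬝ᵥ (Δ *ᵥ u) = 0 := by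
    intro u; have := hskew u u; linarith
  have cdot : ∀ (A : Matrix (Fin (2*n)) (Fin (2*n)) ℝ) (u v : Fin (2*n) → ℝ),
      (fun i => ((u i : ℂ))) ⬝ᵥ ((A.map (fun x : ℝ => (x:ℂ))) *ᵥ (fun i => ((v i : ℂ))))
        = ((u ⬝ᵥ (A *ᵥ v) : ℝ) : ℂ) := by
    intro A u v
    have h1 : (A.map (fun x : ℝ => (x:ℂ))) *ᵥ (fun i => ((v i : ℂ)))
        = fun i => (((A *ᵥ v) i : ℝ) : ℂ) :=
      funext fun i => (RingHom.map_mulVec Complex.ofRealHom A v i).symm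
    rw [h1]
    exact (RingHom.map_dotProduct Complex.ofRealHom u (A *ᵥ v)).symm
  have key : ∀ u v : Fin (2*n) → ℝ,
      0 ≤ u ⬝ᵥ (ν *ᵥ u) + v ⬝ᵥ (ν *ᵥ v) - 2 * (u ⬝ᵥ (Δ *ᵥ v)) := by
    intro u v
    set uc : Fin (2*n) → ℂ := fun i => ((u i : ℂ)) with huc
    set vc : Fin (2*n) → ℂ := fun i => ((v i : ℂ)) with hvc
    have hz := h.dotProduct_mulVec_nonneg (uc + Complex.I • vc)
    have hstar : star (uc + Complex.I • vc) = uc - Complex.I • vc := by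
      funext i
      simp [huc, hvc, Complex.ext_iff]
    rw [hstar] at hz
    have expand : (uc - Complex.I • vc) ⬝ᵥ
        ((ν.map (fun x : ℝ => (x : ℂ)) + Complex.I • Δ.map (fun x : ℝ => (x : ℂ))) *ᵥ
          (uc + Complex.I • vc))
        = ((u ⬝ᵥ (ν *ᵥ u) + v ⬝ᵥ (ν *ᵥ v) - 2 * (u ⬝ᵥ (Δ *ᵥ v)) : ℝ) : ℂ) := by
      simp only [add_mulVec, smul_mulVec, mulVec_add, mulVec_smul,
        dotProduct_add, sub_dotProduct, dotProduct_smul, smul_dotProduct,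
        smul_eq_mul, smul_smul]
      rw [cdot ν u u, cdot ν u v, cdot ν v u, cdot ν v v,
          cdot Δ u u, cdot Δ u v, cdot Δ v u, cdot Δ v v,
          hsymm' v u, hskew0 u, hskew0 v, hskew v u]
      push_cast
      ring_nf
      simp only [Complex.I_sq]
      ring
    rw [expand] at hz
    exact_mod_cast hz
  have hps : ∀ x : Fin (2*n) → ℝ, 0 ≤ x ⬝ᵥ (ν *ᵥ x) := by
    intro x
    have := key x 0
    simpa using this
  rw [posDef_iff_dotProduct_mulVec]
  constructor
  · rw [IsHermitian, conjTranspose_eq_transpose_of_trivial]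
    exact hsymm
  · intro x hx
    rw [star_trivial]
    set p := x ⬝ᵥ x with hp
    have hp0 : 0 ≤ p := by simpa [hp, dotProduct] using Finset.sum_nonneg fun i _ => mul_self_nonneg (x i)
    have hpne : p ≠ 0 := fun hh => hx (dotProduct_self_eq_zero.mp hh)
    have hppos : 0 < p := lt_of_le_of_ne hp0 (Ne.symm hpne)
    set c := (Δ *ᵥ x) ⬝ᵥ (ν *ᵥ (Δ *ᵥ x)) with hc
    have hc0 : 0 ≤ c := hps _
    have hcpos : (0:ℝ) < c + 1 := by linarith
    set s : ℝ := p / (c + 1) with hs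
    have hspos : 0 < s := div_pos hppos hcpos
    have hsc : s * (c + 1) = p := div_mul_cancel₀ p (ne_of_gt hcpos)
    have hk := key x ((-s) • (Δ *ᵥ x))
    have h1 : ((-s) • (Δ *ᵥ x)) ⬝ᵥ (ν *ᵥ ((-s) • (Δ *ᵥ x))) = s^2 * c := by
      rw [smul_dotProduct, mulVec_smul, dotProduct_smul, ← hc]
      simp; ring
    have h2 : x ⬝ᵥ (Δ *ᵥ ((-s) • (Δ *ᵥ x))) = s * p := by
      rw [mulVec_smul, dotProduct_smul, deltaN_sq_mulVec n x]
      rw [dotProduct_neg, ← hp]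
      simp only [smul_eq_mul]
      ring
    rw [h1, h2] at hk
    have h5 : s^2 * c = s * p - s^2 := by rw [← hsc]; ring
    nlinarith [mul_pos hspos hppos, sq_nonneg s]
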